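/- For T > 0, define λ₁(α, P) = 1 − P(1−α)(1+T)/((1+P)(P+T)) and λ₂(α, P) = (1−α)·[1 − (T+P²)/(2(1+P)(P+T))]. Then the infimum over α ∈ [0, 1] and P ∈ (0, ∞) of max{λ₁(α,P), λ₂(α,P)} equals (2+s)/(4+s), where s = 2√T/(1+T); the infimum is attained at P = √T and α = (2−s)/(4+s). Equivalently, with T = tan²θ, the optimal value is (2 + sin 2θ)/(4 + sin 2θ). -/

import Mathlib

theorem stmt_13 (T : ℝ) (hT : 0 < T) (s : ℝ) (hs : s = 2 * Real.sqrt T / (1 + T))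
    (lam₁ lam₂ : ℝ → ℝ → ℝ)
    (h1 : ∀ α P, lam₁ α P = 1 - P * (1 - α) * (1 + T) / ((1 + P) * (P + T)))
    (h2 : ∀ α P, lam₂ α P = (1 - α) * (1 - (T + P ^ 2) / (2 * (1 + P) * (P + T)))) :
    IsLeast {y : ℝ | ∃ α ∈ Set.Icc (0 : ℝ) 1, ∃ P ∈ Set.Ioi (0 : ℝ),
        y = max (lam₁ α P) (lam₂ α P)}
      ((2 + s) / (4 + s)) ∧
    max (lam₁ ((2 - s) / (4 + s)) (Real.sqrt T)) (lam₂ ((2 - s) / (4 + s)) (Real.sqrt T))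
      = (2 + s) / (4 + s) ∧
    ∀ θ ∈ Set.Ioo 0 (Real.pi / 2), T = Real.tan θ ^ 2 →
      (2 + s) / (4 + s) = (2 + Real.sin (2 * θ)) / (4 + Real.sin (2 * θ)) := by
  set r := Real.sqrt T with hr_def
  have hr : 0 < r := Real.sqrt_pos.mpr hT
  have hr2 : r * r = T := Real.mul_self_sqrt hT.le
  have h1T : (0:ℝ) < 1 + T := by linarith
  have hspos : 0 < s := by rw [hs]; positivity
  have hsle : s ≤ 1 := by
    rw [hs, div_le_one h1T]
    nlinarith [sq_nonneg (1 - r)]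
  have h4s : (0:ℝ) < 4 + s := by linarith
  have hsT : s * (1 + T) = 2 * r := by
    rw [hs]; field_simp
  -- equality at the optimum
  have eq1 : lam₁ ((2 - s) / (4 + s)) r = (2 + s) / (4 + s) := by
    rw [h1, hs, ← hr2]
    have h1r : (0:ℝ) < 1 + r := by linarith
    have h2r : (0:ℝ) < r + r * r := by positivity
    have h3r : (0:ℝ) < 1 + r * r := by positivity
    have h4r : (0:ℝ) < 4 + 2 * r / (1 + r * r) := by positivity
    field_simp
    ring
  have eq2 : lam₂ ((2 - s) / (4 + s)) r = (2 + s) / (4 + s) := by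
    rw [h2, hs, ← hr2]
    have h1r : (0:ℝ) < 1 + r := by linarith
    have h2r : (0:ℝ) < r + r * r := by positivity
    have h3r : (0:ℝ) < 1 + r * r := by positivity
    have h4r : (0:ℝ) < 4 + 2 * r / (1 + r * r) := by positivity
    field_simp
    ring
  refine ⟨⟨⟨(2 - s) / (4 + s), ⟨div_nonneg (by linarith) h4s.le, by rw [div_le_one h4s]; linarith⟩,
      r, hr, by rw [eq1, eq2, max_self]⟩, ?_⟩, by rw [eq1, eq2, max_self], ?_⟩
  · -- lower bound
    rintro y ⟨α, hα, P, hP, rfl⟩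
    simp only [Set.mem_Ioi] at hP
    set M := max (lam₁ α P) (lam₂ α P) with hM
    have hPT : (0:ℝ) < P + T := by linarith
    have h1P : (0:ℝ) < 1 + P := by linarith
    set A : ℝ := 2 * P * (1 + T) with hA_def
    set B : ℝ := 2 * (1 + P) * (P + T) - T - P ^ 2 with hB_def
    have hA : 0 < A := by positivity
    have hB : 0 < B := by nlinarith
    have hId : B * lam₁ α P + A * lam₂ α P = B := by
      rw [h1, h2]
      field_simp
      ring
    have hkey : (A + B) * (2 + s) ≤ B * (4 + s) := by
      nlinarith [sq_nonneg (P - r), hsT, hspos, hT, hP]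
    have hl1 : lam₁ α P ≤ M := le_max_left _ _
    have hl2 : lam₂ α P ≤ M := le_max_right _ _
    have hBM : B ≤ (A + B) * M := by nlinarith
    rw [div_le_iff₀ h4s]
    nlinarith [mul_le_mul_of_nonneg_right hBM h4s.le]
  · -- trig identity
    intro θ hθ hTθ
    have hcos : 0 < Real.cos θ := Real.cos_pos_of_mem_Ioo
      ⟨by linarith [hθ.1, Real.pi_pos], hθ.2⟩
    have hsin : 0 < Real.sin θ := Real.sin_pos_of_pos_of_lt_pi hθ.1
      (lt_trans hθ.2 (by linarith [Real.pi_pos]))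
    have htan : 0 ≤ Real.tan θ := by
      rw [Real.tan_eq_sin_div_cos]; positivity
    have hsq : r = Real.tan θ := by rw [hr_def, hTθ, Real.sqrt_sq htan]
    have hss : s = Real.sin (2 * θ) := by
      have hc2 : 1 + Real.tan θ ^ 2 = 1 / Real.cos θ ^ 2 := by
        rw [Real.tan_eq_sin_div_cos]
        field_simp
        linarith [Real.sin_sq_add_cos_sq θ]
      rw [hs, hsq, hTθ, hc2, Real.sin_two_mul, Real.tan_eq_sin_div_cos]
      field_simp
    rw [hss]
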